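/- Let D be an N × m array over s symbols with all columns balanced. Suppose the pairwise coincidence numbers δ_{ij}(D) (i < j) are all equal to some constant c. Then c = m(N − s)/[(N − 1)s]; in particular, (N − 1)s divides m(N − s). -/

import Mathlib

/-- If all pairwise coincidence numbers of a balanced `s`-level array are
equal to a constant `c`, then `c = m(N−s)/((N−1)s)`; in particular
`(N−1)s` divides `m(N−s)`. -/
theorem constant_coincidence_value
    {N m s : ℕ} (hN : 2 ≤ N) (hs : 0 < s) (hdvd : s ∣ N)
    (D : Fin N → Fin m → Fin s)
    (hbal : ∀ (k : Fin m) (a : Fin s),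
      (Finset.univ.filter (fun i => D i k = a)).card = N / s)
    (c : ℕ)
    (hc : ∀ i j : Fin N, i ≠ j →
      (Finset.univ.filter (fun k => D i k = D j k)).card = c) :
    (c : ℚ) = (m : ℚ) * ((N : ℚ) - s) / (((N : ℚ) - 1) * s) ∧
    ((N - 1) * s) ∣ m * (N - s) := by
  set t := N / s with ht
  have htN : s * t = N := Nat.mul_div_cancel' hdvd
  have hN0 : 0 < N := by omega
  have ht1 : 1 ≤ t := Nat.pos_of_ne_zero (fun h => by
    rw [h, mul_zero] at htN; omega)
  -- double counting
  have hS1 : ∑ i : Fin N, ∑ j ∈ Finset.univ.erase i,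
      (Finset.univ.filter (fun k => D i k = D j k)).card = N * ((N - 1) * c) := by
    have inner : ∀ i : Fin N, ∑ j ∈ Finset.univ.erase i,
        (Finset.univ.filter (fun k => D i k = D j k)).card = (N - 1) * c := by
      intro i
      rw [Finset.sum_congr rfl
        (fun j hj => hc i j (Ne.symm (Finset.ne_of_mem_erase hj)))]
      simp [Finset.card_erase_of_mem]
    simp [inner, Finset.card_univ]
  have hS2 : ∑ i : Fin N, ∑ j ∈ Finset.univ.erase i,
      (Finset.univ.filter (fun k => D i k = D j k)).card = m * (N * (t - 1)) := by
    have hrw : ∀ i j : Fin N, (Finset.univ.filter (fun k => D i k = D j k)).card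
        = ∑ k : Fin m, if D i k = D j k then 1 else 0 := by
      intro i j; rw [Finset.card_filter]
    have inner : ∀ (k : Fin m) (i : Fin N),
        ∑ j ∈ Finset.univ.erase i, (if D i k = D j k then 1 else 0) = t - 1 := by
      intro k i
      have h1 : ∑ j ∈ Finset.univ.erase i, (if D i k = D j k then 1 else 0)
          = ((Finset.univ.erase i).filter (fun j => D j k = D i k)).card := by
        rw [Finset.card_filter]
        exact Finset.sum_congr rfl (fun j _ => by simp [eq_comm])
      rw [h1, Finset.filter_erase, Finset.card_erase_of_mem (by simp), hbal k (D i k)]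
    calc ∑ i : Fin N, ∑ j ∈ Finset.univ.erase i,
          (Finset.univ.filter (fun k => D i k = D j k)).card
        = ∑ i : Fin N, ∑ k : Fin m, ∑ j ∈ Finset.univ.erase i,
            (if D i k = D j k then 1 else 0) := by
          exact Finset.sum_congr rfl (fun i _ => by
            simp only [hrw]; exact Finset.sum_comm)
      _ = ∑ k : Fin m, ∑ i : Fin N, ∑ j ∈ Finset.univ.erase i,
            (if D i k = D j k then 1 else 0) := Finset.sum_comm
      _ = ∑ k : Fin m, ∑ i : Fin N, (t - 1) := by
          exact Finset.sum_congr rfl (fun k _ =>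
            Finset.sum_congr rfl (fun i _ => inner k i))
      _ = m * (N * (t - 1)) := by simp [Finset.card_univ, mul_comm, mul_assoc]
  have hkey : (N - 1) * c = m * (t - 1) := by
    have h2 : N * ((N - 1) * c) = N * (m * (t - 1)) := by
      rw [← hS1, hS2]; ring
    exact Nat.eq_of_mul_eq_mul_left hN0 h2
  have hsN : s ≤ N := Nat.le_of_dvd hN0 hdvd
  have hkey2 : (N - 1) * s * c = m * (N - s) := by
    have e1 : (N - 1) * s * c = ((N - 1) * c) * s := by ring
    rw [e1, hkey, mul_assoc, Nat.sub_mul, one_mul, mul_comm t s, htN]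
  refine ⟨?_, ⟨c, hkey2.symm⟩⟩
  have h1N : (1 : ℚ) < N := by exact_mod_cast (by omega : 1 < N)
  have hne : ((N : ℚ) - 1) * s ≠ 0 :=
    mul_ne_zero (by linarith) (by exact_mod_cast hs.ne')
  rw [eq_div_iff hne]
  have hcast := congrArg (fun x : ℕ => (x : ℚ)) hkey2
  push_cast [Nat.cast_sub hsN, Nat.cast_sub (by omega : 1 ≤ N)] at hcast
  linarith [hcast]
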